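/- Let f be a function on ℝ^{Nn} which is asymptotically W^{1,φ}-quasiconvex (i.e. f agrees outside a ball with a uniformly strictly W^{1,φ}-quasiconvex function g) and locally bounded from below. Then there exist a constant M > 0 and a uniformly strictly W^{1,φ}-quasiconvex function G such that f(z) = G(z) for |z| > M and G(z) ≤ f(z) for all z ∈ ℝ^{Nn}. -/

import Mathlib

open MeasureTheory Real Filter

def IsNFunction (φ φ' : ℝ → ℝ) : Prop :=
  ConvexOn ℝ (Set.Ici 0) φ ∧
  φ 0 = 0 ∧ φ' 0 = 0 ∧
  (∀ t : ℝ, 0 ≤ t → φ t = ∫ s in (0:ℝ)..t, φ' s) ∧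
  (∀ t : ℝ, 0 ≤ t → ContinuousWithinAt φ' (Set.Ici t) t) ∧
  MonotoneOn φ' (Set.Ici 0) ∧
  (∀ t : ℝ, 0 < t → 0 < φ' t) ∧
  Tendsto φ' atTop atTop


/-- The Assumption: `φ` is an N-function of class `C¹([0,∞)) ∩ C²((0,∞))`,
with derivative `φ'` and second derivative `φ''`. -/
def SatisfiesAssumption (φ φ' φ'' : ℝ → ℝ) : Prop :=
  IsNFunction φ φ' ∧
  (∀ t : ℝ, 0 ≤ t → HasDerivWithinAt φ (φ' t) (Set.Ici 0) t) ∧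
  ContinuousOn φ' (Set.Ici 0) ∧
  (∀ t : ℝ, 0 < t → HasDerivAt φ' (φ'' t) t) ∧
  ContinuousOn φ'' (Set.Ioi 0)

/-- The shifted N-function `φ_a(t) = ∫₀ᵗ φ'(a+s)·s/(a+s) ds`. -/
noncomputable def shiftedPhi (φ' : ℝ → ℝ) (a t : ℝ) : ℝ :=
  ∫ s in (0:ℝ)..t, φ' (a + s) * s / (a + s)

/-- The gradient of a map `ξ : ℝⁿ → ℝ^N` at `x`, viewed as an element of `ℝ^{N×n}`
with the Euclidean (Frobenius) norm. -/
noncomputable def gradMat {n N : ℕ} (ξ : EuclideanSpace ℝ (Fin n) → EuclideanSpace ℝ (Fin N))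
    (x : EuclideanSpace ℝ (Fin n)) : EuclideanSpace ℝ (Fin N × Fin n) :=
  WithLp.toLp 2 (fun p : Fin N × Fin n => fderiv ℝ ξ x (EuclideanSpace.single p.2 1) p.1)

/-- `g` is uniformly strictly `W^{1,φ}`-quasiconvex with constant `k`:
`⨍_{B₁} g(z + Dξ) ≥ g(z) + k·⨍_{B₁} φ_{1+|z|}(|Dξ|)` for all `z` and all
`ξ ∈ C¹_c(B₁, ℝ^N)`. -/
def UnifStrictQC {n N : ℕ} (φ' : ℝ → ℝ) (k : ℝ)
    (g : EuclideanSpace ℝ (Fin N × Fin n) → ℝ) : Prop :=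
  ∀ (z : EuclideanSpace ℝ (Fin N × Fin n))
    (ξ : EuclideanSpace ℝ (Fin n) → EuclideanSpace ℝ (Fin N)),
    ContDiff ℝ 1 ξ → HasCompactSupport ξ →
    tsupport ξ ⊆ Metric.ball (0 : EuclideanSpace ℝ (Fin n)) 1 →
    g z + k * ⨍ x in Metric.ball (0 : EuclideanSpace ℝ (Fin n)) 1,
        shiftedPhi φ' (1 + ‖z‖) ‖gradMat ξ x‖ ≤
      ⨍ x in Metric.ball (0 : EuclideanSpace ℝ (Fin n)) 1, g (z + gradMat ξ x)

/-- `f` is asymptotically `W^{1,φ}`-quasiconvex: `f` agrees outside a ball with a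
continuous uniformly strictly `W^{1,φ}`-quasiconvex function. -/
def AsympQC {n N : ℕ} (φ' : ℝ → ℝ) (f : EuclideanSpace ℝ (Fin N × Fin n) → ℝ) : Prop :=
  ∃ (M : ℝ) (g : EuclideanSpace ℝ (Fin N × Fin n) → ℝ) (k : ℝ),
    0 < M ∧ Continuous g ∧ 0 < k ∧ UnifStrictQC φ' k g ∧ ∀ z, M < ‖z‖ → f z = g z

set_option linter.unusedSectionVars false

section ShiftedPhi

variable {φ' : ℝ → ℝ}

lemma phip_nonneg (hmono : MonotoneOn φ' (Set.Ici 0)) (h0 : φ' 0 = 0) (hx : (0:ℝ) ≤ x) : 0 ≤ φ' x := by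
  have := hmono (Set.self_mem_Ici) hx hx
  rw [h0] at this; exact this

lemma integrand_contOn (hcont : ContinuousOn φ' (Set.Ici 0)) {a : ℝ} (ha : 0 < a) :
    ContinuousOn (fun s => φ' (a + s) * s / (a + s)) (Set.Ici 0) := by
  apply ContinuousOn.div
  · exact (hcont.comp ((continuous_const.add continuous_id).continuousOn)
      (fun s hs => by simp only [Set.mem_Ici, id_eq, Pi.add_apply] at *; linarith)).mul continuousOn_id
  · exact (continuous_const.add continuous_id).continuousOn
  · intro s hs; simp only [Set.mem_Ici] at hs; positivity

lemma integrand_intble (hcont : ContinuousOn φ' (Set.Ici 0)) {a t : ℝ} (ha : 0 < a) (ht : 0 ≤ t) :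
    IntervalIntegrable (fun s => φ' (a + s) * s / (a + s)) volume 0 t := by
  apply ContinuousOn.intervalIntegrable
  rw [Set.uIcc_of_le ht]
  exact (integrand_contOn hcont ha).mono (Set.Icc_subset_Ici_self)

lemma integrand_nonneg (hmono : MonotoneOn φ' (Set.Ici 0)) (h0 : φ' 0 = 0) {a : ℝ} (ha : 0 < a) {s : ℝ} (hs : 0 ≤ s) :
    0 ≤ φ' (a + s) * s / (a + s) := by
  have h1 : 0 ≤ φ' (a + s) := phip_nonneg hmono h0 (by linarith)
  positivity

lemma shiftedPhi_nonneg (hmono : MonotoneOn φ' (Set.Ici 0)) (h0 : φ' 0 = 0) {a t : ℝ} (ha : 0 < a) (ht : 0 ≤ t) :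
    0 ≤ shiftedPhi φ' a t := by
  apply intervalIntegral.integral_nonneg ht
  intro s hs; exact integrand_nonneg hmono h0 ha hs.1

lemma shiftedPhi_contOn (hcont : ContinuousOn φ' (Set.Ici 0)) {a T : ℝ} (ha : 0 < a) (hT : 0 ≤ T) :
    ContinuousOn (shiftedPhi φ' a) (Set.Icc 0 T) := by
  have := intervalIntegral.continuousOn_primitive_interval (a := (0:ℝ)) (b := T)
    (μ := volume) (f := fun s => φ' (a + s) * s / (a + s)) ?_
  · rwa [Set.uIcc_of_le hT] at this
  · rw [Set.uIcc_of_le hT]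
    exact ((integrand_contOn hcont ha).mono Set.Icc_subset_Ici_self).integrableOn_compact
      isCompact_Icc

lemma shiftedPhi_ge (hcont : ContinuousOn φ' (Set.Ici 0)) (hmono : MonotoneOn φ' (Set.Ici 0)) (h0 : φ' 0 = 0) {a t r : ℝ} (ha : 0 < a) (ht : 0 < t) (hr : 0 ≤ r)
    (hra : r ≤ a + t / 2) :
    φ' r * (t / 2) * ((t / 2) / (a + t)) ≤ shiftedPhi φ' a t := by
  have h2 : (0:ℝ) ≤ t / 2 := by linarith
  have hsplit : shiftedPhi φ' a t
      = (∫ s in (0:ℝ)..(t/2), φ' (a + s) * s / (a + s))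
        + ∫ s in (t/2)..t, φ' (a + s) * s / (a + s) := by
    rw [shiftedPhi, ← intervalIntegral.integral_add_adjacent_intervals
      ((integrand_intble hcont ha (le_of_lt ht)).mono_set ?_)
      ((integrand_intble hcont ha (le_of_lt ht)).mono_set ?_)]
    · rw [Set.uIcc_of_le h2, Set.uIcc_of_le (le_of_lt ht)]
      exact Set.Icc_subset_Icc le_rfl (by linarith)
    · rw [Set.uIcc_of_le (by linarith : t/2 ≤ t), Set.uIcc_of_le (le_of_lt ht)]
      exact Set.Icc_subset_Icc h2 le_rfl
  have h1 : 0 ≤ ∫ s in (0:ℝ)..(t/2), φ' (a + s) * s / (a + s) := by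
    apply intervalIntegral.integral_nonneg h2
    intro s hs; exact integrand_nonneg hmono h0 ha hs.1
  have h3 : φ' r * ((t / 2) / (a + t)) * (t - t/2)
      ≤ ∫ s in (t/2)..t, φ' (a + s) * s / (a + s) := by
    have := intervalIntegral.integral_mono_on (a := t/2) (b := t) (μ := volume)
      (f := fun _ => φ' r * ((t / 2) / (a + t)))
      (g := fun s => φ' (a + s) * s / (a + s)) (by linarith)
      (intervalIntegrable_const)
      (((integrand_intble hcont ha (le_of_lt ht)).mono_set (by
        rw [Set.uIcc_of_le (by linarith : t/2 ≤ t), Set.uIcc_of_le (le_of_lt ht)]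
        exact Set.Icc_subset_Icc h2 le_rfl))) ?_
    · rw [intervalIntegral.integral_const, smul_eq_mul] at this
      calc φ' r * ((t / 2) / (a + t)) * (t - t/2)
          = (t - t/2) * (φ' r * ((t / 2) / (a + t))) := by ring
        _ ≤ _ := this
    · intro s hs
      obtain ⟨hs1, hs2⟩ := hs
      have has : r ≤ a + s := by linarith
      have hφ : φ' r ≤ φ' (a + s) := hmono (Set.mem_Ici.2 hr)
        (Set.mem_Ici.2 (by linarith)) has
      have hfrac : (t / 2) / (a + t) ≤ s / (a + s) := by
        rw [div_le_div_iff₀ (by linarith) (by linarith)]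
        nlinarith
      have hφr : 0 ≤ φ' r := phip_nonneg hmono h0 hr
      calc φ' r * ((t / 2) / (a + t)) ≤ φ' (a+s) * (s / (a+s)) := by
            apply mul_le_mul hφ hfrac (by positivity)
              (phip_nonneg hmono h0 (by linarith))
        _ = φ' (a + s) * s / (a + s) := by ring
  calc φ' r * (t / 2) * ((t / 2) / (a + t))
      = φ' r * ((t / 2) / (a + t)) * (t - t/2) := by ring
    _ ≤ _ := by rw [hsplit]; linarith

end ShiftedPhi
section Cutoff

local notation "T" => Real.smoothTransition

lemma derivT_zero_of_neg {x : ℝ} (hx : x < 0) : deriv T x = 0 := by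
  have h : T =ᶠ[nhds x] fun _ => (0:ℝ) :=
    eventually_of_mem (Iio_mem_nhds hx) fun y hy =>
      Real.smoothTransition.zero_of_nonpos (le_of_lt hy)
  rw [h.deriv_eq, deriv_const]

lemma derivT_zero_of_gt {x : ℝ} (hx : 1 < x) : deriv T x = 0 := by
  have h : T =ᶠ[nhds x] fun _ => (1:ℝ) :=
    eventually_of_mem (Ioi_mem_nhds hx) fun y hy =>
      Real.smoothTransition.one_of_one_le (le_of_lt hy)
  rw [h.deriv_eq, deriv_const]

lemma deriv2T_zero_of_neg {x : ℝ} (hx : x < 0) : deriv (deriv T) x = 0 := by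
  have h : deriv T =ᶠ[nhds x] fun _ => (0:ℝ) :=
    eventually_of_mem (Iio_mem_nhds hx) fun y hy => derivT_zero_of_neg hy
  rw [h.deriv_eq, deriv_const]

lemma contDiff_derivT : ContDiff ℝ (⊤ : ℕ∞) (deriv T) := by
  have h : ContDiff ℝ (⊤ : ℕ∞) T := Real.smoothTransition.contDiff
  have h' := (contDiff_infty_iff_deriv.mp (by exact_mod_cast h)).2
  exact_mod_cast h'

lemma exists_boundT1 : ∃ B : ℝ, 0 ≤ B ∧ ∀ x, |deriv T x| ≤ B := by
  have hcs : HasCompactSupport (deriv T) := by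
    apply HasCompactSupport.intro (isCompact_Icc (a := (0:ℝ)) (b := 1))
    intro x hx
    rcases lt_or_ge x 0 with h | h
    · exact derivT_zero_of_neg h
    · exact derivT_zero_of_gt (by simpa [Set.mem_Icc, h] using hx)
  obtain ⟨C, hC⟩ := hcs.exists_bound_of_continuous
    ((Real.smoothTransition.contDiff (n := ⊤)).continuous_deriv (by exact_mod_cast le_top))
  exact ⟨C, le_trans (abs_nonneg _) (by simpa using hC 0), fun x => by simpa using hC x⟩

lemma exists_boundT2 : ∃ L : ℝ, 0 ≤ L ∧ ∀ x, |deriv (deriv T) x| ≤ L := by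
  have hcs : HasCompactSupport (deriv (deriv T)) := by
    apply HasCompactSupport.intro (isCompact_Icc (a := (0:ℝ)) (b := 1))
    intro x hx
    rcases lt_or_ge x 0 with h | h
    · exact deriv2T_zero_of_neg h
    · have hx1 : 1 < x := by simpa [Set.mem_Icc, h] using hx
      have h : deriv T =ᶠ[nhds x] fun _ => (0:ℝ) :=
        eventually_of_mem (Ioi_mem_nhds hx1) fun y hy => derivT_zero_of_gt hy
      rw [h.deriv_eq, deriv_const]
  obtain ⟨C, hC⟩ := hcs.exists_bound_of_continuous (contDiff_derivT.continuous_deriv (by exact_mod_cast le_top))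
  exact ⟨C, le_trans (abs_nonneg _) (by simpa using hC 0), fun x => by simpa using hC x⟩

end Cutoff

section Lam

local notation "T" => Real.smoothTransition

lemma hasDerivAt_T (x : ℝ) : HasDerivAt T (deriv T x) x :=
  (((Real.smoothTransition.contDiff (n := 1)).differentiable (by simp))
    x).hasDerivAt

lemma hasDerivAt_derivT (x : ℝ) : HasDerivAt (deriv T) (deriv (deriv T) x) x :=
  ((contDiff_derivT.differentiable (by simp)) x).hasDerivAt

variable {E : Type*} [NormedAddCommGroup E] [InnerProductSpace ℝ E]

noncomputable def lamF (c b W : ℝ) (y : E) : ℝ :=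
  c * Real.smoothTransition ((b - ‖y‖^2)/W)

noncomputable def sigmaF (c b W : ℝ) (z w : E) : ℝ :=
  c * (deriv Real.smoothTransition ((b - ‖z‖^2)/W) * (-(2 * (inner ℝ z w : ℝ))/W))

lemma lamF_cont (c b W : ℝ) : Continuous (lamF c b W : E → ℝ) := by
  apply continuous_const.mul
  exact Real.smoothTransition.continuous.comp
    (((continuous_const.sub ((continuous_norm).pow 2)).div_const W))

lemma lamF_nonneg (hc : 0 ≤ c) (y : E) : 0 ≤ lamF c b W y :=
  mul_nonneg hc (Real.smoothTransition.nonneg _)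

lemma lamF_le (hc : 0 ≤ c) (y : E) : lamF c b W y ≤ c := by
  have := Real.smoothTransition.le_one ((b - ‖y‖^2)/W)
  calc lamF c b W y ≤ c * 1 := by
        exact mul_le_mul_of_nonneg_left this hc
    _ = c := mul_one c

lemma lamF_zero (hW : 0 < W) (hy : b ≤ ‖y‖^2) : lamF c b W (y : E) = 0 := by
  rw [lamF, Real.smoothTransition.zero_of_nonpos, mul_zero]
  apply div_nonpos_of_nonpos_of_nonneg (by linarith) (le_of_lt hW)

lemma lamF_eq_c (hW : 0 < W) (hy : ‖(y : E)‖^2 ≤ b - W) : lamF c b W y = c := by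
  rw [lamF, Real.smoothTransition.one_of_one_le, mul_one]
  rw [le_div_iff₀ hW, one_mul]; linarith

lemma sigmaF_zero (hW : 0 < W) (hy : b < ‖(z : E)‖^2) (w : E) : sigmaF c b W z w = 0 := by
  rw [sigmaF, derivT_zero_of_neg, zero_mul, mul_zero]
  apply div_neg_of_neg_of_pos (by linarith) hW

lemma sigmaF_bound {B : ℝ} (hB : ∀ x, |deriv Real.smoothTransition x| ≤ B)
    (hc : 0 ≤ c) (hW : 0 < W) (hM' : 0 ≤ M') (z w : E) :
    |sigmaF c (M'^2) W z w| ≤ c * B * (2 * M' * ‖w‖) / W := by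
  rcases le_or_gt (‖z‖^2) (M'^2) with h | h
  · have hz : ‖z‖ ≤ M' := by nlinarith [norm_nonneg z]
    have hi : |(inner ℝ z w : ℝ)| ≤ M' * ‖w‖ :=
      le_trans (abs_real_inner_le_norm z w)
        (mul_le_mul_of_nonneg_right hz (norm_nonneg w))
    have hBnn : 0 ≤ B := le_trans (abs_nonneg _) (hB 0)
    rw [sigmaF, abs_mul, abs_of_nonneg hc, abs_mul, abs_div]
    rw [abs_of_pos hW]
    calc c * (|deriv T ((M'^2 - ‖z‖^2)/W)| * (|(-(2 * (inner ℝ z w : ℝ)))| / W))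
        ≤ c * (B * ((2 * (M' * ‖w‖)) / W)) := by
          apply mul_le_mul_of_nonneg_left _ hc
          apply mul_le_mul (hB _) _ (div_nonneg (abs_nonneg _) hW.le) hBnn
          have h2 : |(-(2 * (inner ℝ z w : ℝ)))| ≤ 2 * (M' * ‖w‖) := by
            rw [abs_neg, abs_mul]
            calc |(2:ℝ)| * |(inner ℝ z w : ℝ)| = 2 * |(inner ℝ z w : ℝ)| := by norm_num
              _ ≤ 2 * (M' * ‖w‖) := by linarith
          gcongr
      _ = c * B * (2 * M' * ‖w‖) / W := by ring
  · rw [sigmaF_zero hW h, abs_zero]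
    have hBnn : 0 ≤ B := le_trans (abs_nonneg _) (hB 0)
    exact div_nonneg (by positivity) hW.le

end Lam

section Taylor

local notation "T" => Real.smoothTransition

variable {E : Type*} [NormedAddCommGroup E] [InnerProductSpace ℝ E]

lemma lamF_taylor {B L c M' W : ℝ}
    (hB : ∀ x, |deriv T x| ≤ B) (hL : ∀ x, |deriv (deriv T) x| ≤ L)
    (hc : 0 ≤ c) (hM' : 0 ≤ M') (hW : 0 < W) (z w : E) :
    |lamF c (M'^2) W (z + w) - lamF c (M'^2) W z - sigmaF c (M'^2) W z w|
      ≤ c * (4 * L * M'^2 / W^2 + 2 * B / W) * ‖w‖^2 := by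
  have hBnn : 0 ≤ B := le_trans (abs_nonneg _) (hB 0)
  have hLnn : 0 ≤ L := le_trans (abs_nonneg _) (hL 0)
  set ir : ℝ := (inner ℝ z w : ℝ) with hir
  set n2 : ℝ := ‖w‖^2 with hn2
  set K : ℝ := c * (4 * L * M'^2 / W^2 + 2 * B / W) with hK
  have hKnn : 0 ≤ K := by
    apply mul_nonneg hc
    apply add_nonneg
    · exact div_nonneg (by positivity) (by positivity)
    · exact div_nonneg (by positivity) hW.le
  set p : ℝ → ℝ := fun s => ‖z‖^2 + (2*s*ir + s^2*n2) with hp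
  have hpq : ∀ s : ℝ, p s = ‖z + s • w‖^2 := by
    intro s
    rw [norm_add_sq_real, real_inner_smul_right, norm_smul]
    simp only [hp, hn2, mul_pow, norm_smul, Real.norm_eq_abs, sq_abs]
    ring
  set A : ℝ → ℝ := fun s => (M'^2 - p s)/W with hA
  have hpd : ∀ s : ℝ, HasDerivAt p (2*ir + 2*s*n2) s := by
    intro s
    have h1 : HasDerivAt (fun s : ℝ => 2*s*ir) (2*ir) s := by
      simpa using ((hasDerivAt_id s).const_mul (2:ℝ)).mul_const ir
    have h2 : HasDerivAt (fun s : ℝ => s^2*n2) (2*s*n2) s := by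
      have := (hasDerivAt_pow 2 s).mul_const n2
      simpa [mul_comm, mul_assoc] using this
    exact (h1.add h2).const_add (‖z‖^2)
  have hAd : ∀ s : ℝ, HasDerivAt A (-(2*ir + 2*s*n2)/W) s := by
    intro s
    exact ((hpd s).const_sub (M'^2)).div_const W
  set u : ℝ → ℝ := fun s => c * T (A s) with hu
  set u1 : ℝ → ℝ := fun s => c * (deriv T (A s) * (-(2*ir + 2*s*n2)/W)) with hu1
  have hud : ∀ s : ℝ, HasDerivAt u (u1 s) s := by
    intro s
    exact ((hasDerivAt_T (A s)).comp s (hAd s)).const_mul c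
  set u2 : ℝ → ℝ := fun s =>
    c * (deriv (deriv T) (A s) * (-(2*ir + 2*s*n2)/W) * (-(2*ir + 2*s*n2)/W)
      + deriv T (A s) * (-(2*n2)/W)) with hu2
  have hu1d : ∀ s : ℝ, HasDerivAt u1 (u2 s) s := by
    intro s
    have h1 : HasDerivAt (fun s => deriv T (A s))
        (deriv (deriv T) (A s) * (-(2*ir + 2*s*n2)/W)) s :=
      (hasDerivAt_derivT (A s)).comp s (hAd s)
    have h2 : HasDerivAt (fun s : ℝ => -(2*ir + 2*s*n2)/W) (-(2*n2)/W) s := by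
      have h3 : HasDerivAt (fun s : ℝ => 2*s*n2) (2*n2) s := by
        simpa using ((hasDerivAt_id s).const_mul (2:ℝ)).mul_const n2
      exact ((h3.const_add (2*ir)).neg).div_const W
    exact (h1.mul h2).const_mul c
  -- bound on u2 on [0,1]
  have hbound : ∀ s ∈ Set.Icc (0:ℝ) 1, |u2 s| ≤ K * n2 := by
    intro s _
    rcases lt_or_ge (A s) 0 with hAs | hAs
    · have e1 : deriv T (A s) = 0 := derivT_zero_of_neg hAs
      have e2 : deriv (deriv T) (A s) = 0 := deriv2T_zero_of_neg hAs
      simp only [hu2, e1, e2, zero_mul, mul_zero, add_zero, zero_add, abs_zero]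
      positivity
    · have hps : p s ≤ M'^2 := by
        have h' := mul_nonneg hAs hW.le
        rw [div_mul_cancel₀ _ (ne_of_gt hW)] at h'
        linarith
      have hns : ‖z + s • w‖ ≤ M' := by
        rw [hpq s] at hps
        nlinarith [norm_nonneg (z + s • w)]
      have hq : |2*ir + 2*s*n2| ≤ 2 * (M' * ‖w‖) := by
        have e : 2*ir + 2*s*n2 = 2 * (inner ℝ (z + s • w) w : ℝ) := by
          rw [inner_add_left, real_inner_smul_left]
          simp only [hir, hn2, real_inner_self_eq_norm_sq]
          ring
        rw [e, abs_mul]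
        have := abs_real_inner_le_norm (z + s • w) w
        calc |(2:ℝ)| * |(inner ℝ (z + s • w) w : ℝ)| = 2 * |(inner ℝ (z + s • w) w : ℝ)| := by
              norm_num
          _ ≤ 2 * (M' * ‖w‖) := by
              have := mul_le_mul_of_nonneg_right hns (norm_nonneg w)
              linarith [abs_real_inner_le_norm (z + s • w) w]
      have hfrac : |(-(2*ir + 2*s*n2)/W)| ≤ 2 * (M' * ‖w‖) / W := by
        rw [abs_div, abs_neg, abs_of_pos hW]
        exact (div_le_div_iff_of_pos_right hW).mpr hq
      have t1 : |deriv (deriv T) (A s) * (-(2*ir + 2*s*n2)/W) * (-(2*ir + 2*s*n2)/W)|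
          ≤ L * (2 * (M' * ‖w‖) / W)^2 := by
        rw [abs_mul, abs_mul, sq, ← mul_assoc]
        apply mul_le_mul
        · exact mul_le_mul (hL _) hfrac (abs_nonneg _) hLnn
        · exact hfrac
        · exact abs_nonneg _
        · exact mul_nonneg hLnn (div_nonneg (by positivity) hW.le)
      have t2 : |deriv T (A s) * (-(2*n2)/W)| ≤ B * (2*n2/W) := by
        rw [abs_mul]
        apply mul_le_mul (hB _) _ (abs_nonneg _) hBnn
        rw [abs_div, abs_neg, abs_of_pos hW,
          abs_of_nonneg (by positivity : (0:ℝ) ≤ 2*n2)]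
      calc |u2 s| ≤ c * (|deriv (deriv T) (A s) * (-(2*ir + 2*s*n2)/W) * (-(2*ir + 2*s*n2)/W)|
            + |deriv T (A s) * (-(2*n2)/W)|) := by
            rw [hu2, abs_mul, abs_of_nonneg hc]
            exact mul_le_mul_of_nonneg_left (abs_add_le _ _) hc
        _ ≤ c * (L * (2 * (M' * ‖w‖) / W)^2 + B * (2*n2/W)) := by
            apply mul_le_mul_of_nonneg_left (add_le_add t1 t2) hc
        _ = K * n2 := by
            rw [hK, hn2]
            field_simp
            ring
  -- first MVT: |u1 s - u1 0| ≤ K * n2 on [0,1]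
  have hstep1 : ∀ s ∈ Set.Icc (0:ℝ) 1, |u1 s - u1 0| ≤ K * n2 := by
    intro s hs
    have := Convex.norm_image_sub_le_of_norm_hasDerivWithin_le
      (f := u1) (f' := u2) (C := K * n2) (s := Set.Icc (0:ℝ) 1)
      (fun x hx => (hu1d x).hasDerivWithinAt) (fun x hx => hbound x hx)
      (convex_Icc 0 1) (Set.left_mem_Icc.2 zero_le_one) hs
    simpa using this.trans (by
      have : |s - 0| ≤ 1 := by
        rw [sub_zero, abs_of_nonneg hs.1]; exact hs.2
      calc K * n2 * ‖s - 0‖ ≤ K * n2 * 1 := by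
            apply mul_le_mul_of_nonneg_left _ (by positivity)
            simpa using this
        _ = K * n2 := mul_one _)
  -- second MVT
  set v : ℝ → ℝ := fun s => u s - s * u1 0 with hv
  have hvd : ∀ s : ℝ, HasDerivAt v (u1 s - u1 0) s := by
    intro s
    exact (hud s).sub (by simpa using (hasDerivAt_id s).mul_const (u1 0))
  have hmain : |v 1 - v 0| ≤ K * n2 * ‖(1:ℝ) - 0‖ := by
    exact Convex.norm_image_sub_le_of_norm_hasDerivWithin_le
      (f := v) (f' := fun s => u1 s - u1 0) (C := K * n2) (s := Set.Icc (0:ℝ) 1)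
      (fun x hx => (hvd x).hasDerivWithinAt) hstep1
      (convex_Icc 0 1) (Set.left_mem_Icc.2 zero_le_one) (Set.right_mem_Icc.2 zero_le_one)
  have e1 : u 1 = lamF c (M'^2) W (z + w) := by
    simp only [hu, hA, lamF, hpq 1, one_smul]
  have e0 : u 0 = lamF c (M'^2) W z := by
    have : p 0 = ‖z‖^2 := by simp [hp]
    simp only [hu, hA, lamF, this]
  have es : u1 0 = sigmaF c (M'^2) W z w := by
    have : p 0 = ‖z‖^2 := by simp [hp]
    simp only [hu1, hA, sigmaF, this, hir]
    norm_num
  have ev : v 1 - v 0 = lamF c (M'^2) W (z + w) - lamF c (M'^2) W z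
      - sigmaF c (M'^2) W z w := by
    simp only [hv, e1, e0, es]
    ring
  rw [← ev]
  simpa using hmain

end Taylor

section Pointwise

local notation "T" => Real.smoothTransition

variable {E : Type*} [NormedAddCommGroup E] [InnerProductSpace ℝ E]

set_option maxHeartbeats 1000000 in
lemma pointwise_est {φ' : ℝ → ℝ} (hcont : ContinuousOn φ' (Set.Ici 0))
    (hmono : MonotoneOn φ' (Set.Ici 0)) (h0 : φ' 0 = 0)
    {B L c M M' k : ℝ}
    (hB : ∀ x, |deriv T x| ≤ B) (hL : ∀ x, |deriv (deriv T) x| ≤ L)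
    (hc : 1 ≤ c) (hM : 0 < M) (hk : 0 < k) (hβ : 0 < φ' (1/2))
    (hM'1 : 1 ≤ M') (hM'2 : 2*M ≤ M')
    (hM'3 : 32*c*(16*L + 8*B + 1)/(k * φ' (1/2)) ≤ M')
    (z w : E) :
    lamF c (M'^2) (M'^2 - M^2) (z + w) - lamF c (M'^2) (M'^2 - M^2) z
      - sigmaF c (M'^2) (M'^2 - M^2) z w
      ≤ k/2 * shiftedPhi φ' (1 + ‖z‖) ‖w‖ := by
  have hBnn : 0 ≤ B := le_trans (abs_nonneg _) (hB 0)
  have hLnn : 0 ≤ L := le_trans (abs_nonneg _) (hL 0)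
  have hcnn : 0 ≤ c := by linarith
  have hM'pos : 0 < M' := by linarith
  set W : ℝ := M'^2 - M^2 with hWdef
  have hW : 0 < W := by nlinarith
  have hW2 : M'^2 ≤ 2*W := by nlinarith
  set β : ℝ := φ' (1/2) with hβdef
  have hM'3' : 32*c*(16*L + 8*B + 1) ≤ M' * (k * β) := by
    rw [div_le_iff₀ (by positivity)] at hM'3
    linarith [hM'3]
  set t : ℝ := ‖w‖ with htdef
  set a : ℝ := 1 + ‖z‖ with hadef
  have ha : 0 < a := by have := norm_nonneg z; simp only [hadef]; linarith
  have ha1 : 1 ≤ a := by have := norm_nonneg z; simp only [hadef]; linarith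
  have htnn : 0 ≤ t := norm_nonneg w
  rcases eq_or_lt_of_le htnn with ht0 | htpos
  · -- t = 0, so w = 0
    have hw0 : w = 0 := norm_eq_zero.mp ht0.symm
    have e3 : sigmaF c (M'^2) W z w = 0 := by
      rw [hw0, sigmaF]; simp
    have e0 : shiftedPhi φ' a t = 0 := by
      rw [← ht0, shiftedPhi, intervalIntegral.integral_same]
    have ezw : z + w = z := by rw [hw0, add_zero]
    rw [ezw, sub_self, zero_sub, e3, neg_zero, e0, mul_zero]
  rcases lt_or_ge (M' + t) (‖z‖) with hfar | hnear
  · -- far case: everything vanishes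
    have hz1 : M' < ‖z‖ := by linarith
    have hzw : M' ≤ ‖z + w‖ := by
      have h := norm_add_le (z + w) (-w)
      simp only [add_neg_cancel_right, norm_neg] at h
      linarith
    have e1 : lamF c (M'^2) W (z + w) = 0 :=
      lamF_zero hW (by nlinarith [norm_nonneg (z+w)])
    have e2 : lamF c (M'^2) W z = 0 := lamF_zero hW (by nlinarith)
    have e3 : sigmaF c (M'^2) W z w = 0 := sigmaF_zero hW (by nlinarith) w
    rw [e1, e2, e3]
    have := shiftedPhi_nonneg hmono h0 ha htnn
    have : 0 ≤ k/2 * shiftedPhi φ' a t := by positivity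
    linarith
  · -- near case: ‖z‖ ≤ M' + t
    rcases le_or_gt t M' with hcase | hcase
    · -- small t: use Taylor estimate
      have hTay := lamF_taylor (c := c) (M' := M') (W := W) hB hL hcnn hM'pos.le hW z w
      have hK : c * (4 * L * M'^2 / W^2 + 2 * B / W) ≤ k * β / (32 * M') := by
        have h1 : 4 * L * M'^2 / W^2 ≤ 16 * L / M'^2 := by
          rw [div_le_div_iff₀ (by positivity) (by positivity)]
          have hsq : M'^2 * M'^2 ≤ (2*W) * (2*W) :=
            mul_self_le_mul_self (by positivity) hW2
          nlinarith
        have h2 : 2 * B / W ≤ 4 * B / M'^2 := by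
          rw [div_le_div_iff₀ hW (by positivity)]
          nlinarith
        have h3 : c * (16 * L / M'^2 + 4 * B / M'^2) ≤ k * β / (32 * M') := by
          rw [← add_div, ← mul_div_assoc, div_le_div_iff₀ (by positivity) (by positivity)]
          have hmul := mul_le_mul_of_nonneg_right hM'3' hM'pos.le
          nlinarith [mul_nonneg (mul_nonneg hM'pos.le hcnn) hBnn,
            mul_nonneg hM'pos.le hcnn]
        calc c * (4 * L * M'^2 / W^2 + 2 * B / W)
            ≤ c * (16 * L / M'^2 + 4 * B / M'^2) := by
              apply mul_le_mul_of_nonneg_left (add_le_add h1 h2) hcnn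
          _ ≤ k * β / (32 * M') := h3
      have hS : β * (t/2) * ((t/2)/(a+t)) ≤ shiftedPhi φ' a t :=
        shiftedPhi_ge hcont hmono h0 ha htpos (by norm_num) (by linarith)
      have hfrac : t/(8*M') ≤ (t/2)/(a+t) := by
        have haM : a + t ≤ 4*M' := by
          simp only [hadef]
          linarith
        rw [div_le_div_iff₀ (by positivity) (by positivity)]
        nlinarith
      have hchain : k * β / (32 * M') * t^2 ≤ k/2 * shiftedPhi φ' a t := by
        have hge : β * (t/2) * (t/(8*M')) ≤ shiftedPhi φ' a t := by
          calc β * (t/2) * (t/(8*M')) ≤ β * (t/2) * ((t/2)/(a+t)) := by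
                apply mul_le_mul_of_nonneg_left hfrac (by positivity)
            _ ≤ shiftedPhi φ' a t := hS
        calc k * β / (32 * M') * t^2 = k/2 * (β * (t/2) * (t/(8*M'))) := by
              field_simp; ring
          _ ≤ k/2 * shiftedPhi φ' a t := by
              apply mul_le_mul_of_nonneg_left hge (by positivity)
      calc lamF c (M'^2) W (z + w) - lamF c (M'^2) W z - sigmaF c (M'^2) W z w
          ≤ |lamF c (M'^2) W (z + w) - lamF c (M'^2) W z - sigmaF c (M'^2) W z w| :=
            le_abs_self _
        _ ≤ c * (4 * L * M'^2 / W^2 + 2 * B / W) * t^2 := hTay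
        _ ≤ k * β / (32 * M') * t^2 := by
            apply mul_le_mul_of_nonneg_right hK (by positivity)
        _ ≤ k/2 * shiftedPhi φ' a t := hchain
    · -- large t
      have hσ : |sigmaF c (M'^2) W z w| ≤ 4*c*B*t/M' := by
        have h1 := sigmaF_bound hB hcnn hW hM'pos.le z w
        have h2 : c * B * (2 * M' * t) / W ≤ 4*c*B*t/M' := by
          rw [div_le_div_iff₀ hW (by positivity)]
          nlinarith [mul_le_mul_of_nonneg_left hW2 (mul_nonneg (mul_nonneg hcnn hBnn) htnn)]
        linarith
      have hLHS : lamF c (M'^2) W (z + w) - lamF c (M'^2) W z - sigmaF c (M'^2) W z w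
          ≤ c * (1 + 4*B) * t / M' := by
        have e1 : lamF c (M'^2) W (z + w) ≤ c := lamF_le hcnn (z+w)
        have e2 : 0 ≤ lamF c (M'^2) W z := lamF_nonneg hcnn z
        have e3 : -sigmaF c (M'^2) W z w ≤ 4*c*B*t/M' := by
          have := neg_abs_le (sigmaF c (M'^2) W z w)
          linarith
        have e4 : c ≤ c * t / M' := by
          rw [le_div_iff₀ hM'pos]
          nlinarith
        have : c * (1 + 4*B) * t / M' = c * t / M' + 4*c*B*t/M' := by ring
        rw [this]
        linarith
      have hS : β * (t/2) * ((t/2)/(a+t)) ≤ shiftedPhi φ' a t := by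
        have h' := shiftedPhi_ge (r := t/2) hcont hmono h0 ha htpos (by linarith) (by linarith)
        have hβt : β ≤ φ' (t/2) := by
          apply hmono (by norm_num) (Set.mem_Ici.2 (by linarith)) (by linarith)
        calc β * (t/2) * ((t/2)/(a+t)) ≤ φ' (t/2) * (t/2) * ((t/2)/(a+t)) := by
              apply mul_le_mul_of_nonneg_right
                (mul_le_mul_of_nonneg_right hβt (by linarith)) (by positivity)
          _ ≤ shiftedPhi φ' a t := h'
      have hfrac : (1:ℝ)/8 ≤ (t/2)/(a+t) := by
        have haM : a + t ≤ 4*t := by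
          simp only [hadef]; linarith
        rw [div_le_div_iff₀ (by norm_num) (by positivity)]
        nlinarith
      have hRHS : k/2 * (β * (t/2) * (1/8)) ≤ k/2 * shiftedPhi φ' a t := by
        apply mul_le_mul_of_nonneg_left _ (by positivity)
        calc β * (t/2) * (1/8) ≤ β * (t/2) * ((t/2)/(a+t)) := by
              apply mul_le_mul_of_nonneg_left hfrac (by positivity)
          _ ≤ shiftedPhi φ' a t := hS
      have hfin : c * (1 + 4*B) * t / M' ≤ k/2 * (β * (t/2) * (1/8)) := by
        rw [div_le_iff₀ hM'pos]
        have hmul := mul_le_mul_of_nonneg_right hM'3' htnn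
        nlinarith [mul_nonneg (mul_nonneg hcnn hLnn) htnn,
          mul_nonneg (mul_nonneg hcnn hBnn) htnn, mul_nonneg hcnn htnn]
      linarith
end Pointwise
section GradMat

variable {n N : ℕ} {ξ : EuclideanSpace ℝ (Fin n) → EuclideanSpace ℝ (Fin N)}

lemma gradMat_continuous (hξ : ContDiff ℝ 1 ξ) : Continuous (gradMat ξ) := by
  have hfd : Continuous (fderiv ℝ ξ) := hξ.continuous_fderiv (by simp)
  have h : Continuous fun x => (fun p : Fin N × Fin n =>
      fderiv ℝ ξ x (EuclideanSpace.single p.2 1) p.1) := by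
    apply continuous_pi
    intro p
    exact (EuclideanSpace.proj p.1).continuous.comp
      ((ContinuousLinearMap.apply ℝ (EuclideanSpace ℝ (Fin N))
        (EuclideanSpace.single p.2 1)).continuous.comp hfd)
  exact (PiLp.continuous_toLp 2 _).comp h

lemma gradMat_zero_outside (hx : x ∉ tsupport ξ) : gradMat ξ x = 0 := by
  have h : fderiv ℝ ξ x = 0 := by
    have := support_fderiv_subset (𝕜 := ℝ) (f := ξ)
    by_contra hne
    exact hx (this hne)
  ext p
  simp [gradMat, h]

lemma gradMat_support (x : EuclideanSpace ℝ (Fin n)) (hx : gradMat ξ x ≠ 0) :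
    x ∈ tsupport ξ := by
  by_contra h
  exact hx (gradMat_zero_outside h)

lemma gradMat_hasCompactSupport (hcs : HasCompactSupport ξ) :
    HasCompactSupport (gradMat ξ) := by
  apply HasCompactSupport.intro hcs
  intro x hx
  exact gradMat_zero_outside hx

lemma integral_inner_gradMat (hξ : ContDiff ℝ 1 ξ) (hcs : HasCompactSupport ξ)
    (hsub : tsupport ξ ⊆ Metric.ball (0 : EuclideanSpace ℝ (Fin n)) 1)
    (z' : EuclideanSpace ℝ (Fin N × Fin n)) :
    ∫ x in Metric.ball (0 : EuclideanSpace ℝ (Fin n)) 1,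
      (inner ℝ z' (gradMat ξ x) : ℝ) = 0 := by
  have hdiff : Differentiable ℝ ξ := hξ.differentiable (by simp)
  set aj : Fin n → EuclideanSpace ℝ (Fin N) := fun j => WithLp.toLp 2 (fun i => z' (i, j)) with haj
  set hj : Fin n → (EuclideanSpace ℝ (Fin n) → ℝ) :=
    fun j => fun y => (inner ℝ (aj j) (ξ y) : ℝ) with hhj
  have hjder : ∀ (j : Fin n) (x : EuclideanSpace ℝ (Fin n)),
      HasFDerivAt (hj j) ((innerSL ℝ (aj j)).comp (fderiv ℝ ξ x)) x := fun j x =>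
    ((innerSL ℝ (aj j)).hasFDerivAt).comp x (hdiff x).hasFDerivAt
  have hjdiff : ∀ j : Fin n, Differentiable ℝ (hj j) := fun j x => (hjder j x).differentiableAt
  have hjfderiv : ∀ (j : Fin n) (x) (v), fderiv ℝ (hj j) x v
      = (inner ℝ (aj j) (fderiv ℝ ξ x v) : ℝ) := by
    intro j x v
    rw [(hjder j x).fderiv]
    rfl
  have hrw : ∀ x, (inner ℝ z' (gradMat ξ x) : ℝ)
      = ∑ j : Fin n, fderiv ℝ (hj j) x (EuclideanSpace.single j 1) := by
    intro x
    have h1 : (inner ℝ z' (gradMat ξ x) : ℝ)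
        = ∑ p : Fin N × Fin n, z' p * gradMat ξ x p := by
      simp [PiLp.inner_apply, RCLike.inner_apply, conj_trivial, mul_comm]
    rw [h1, Fintype.sum_prod_type_right]
    apply Finset.sum_congr rfl
    intro j _
    rw [hjfderiv]
    simp [PiLp.inner_apply, RCLike.inner_apply, conj_trivial, haj, gradMat, mul_comm]
  rw [MeasureTheory.setIntegral_eq_integral_of_forall_compl_eq_zero (fun x hx => by
    rw [gradMat_zero_outside (fun hmem => hx (hsub hmem))]
    simp)]
  calc (∫ x, (inner ℝ z' (gradMat ξ x) : ℝ))
      = ∫ x, ∑ j : Fin n, fderiv ℝ (hj j) x (EuclideanSpace.single j 1) := by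
        congr 1; funext x; exact hrw x
    _ = ∑ j : Fin n, ∫ x, fderiv ℝ (hj j) x (EuclideanSpace.single j 1) := by
        apply MeasureTheory.integral_finset_sum
        intro j _
        apply Continuous.integrable_of_hasCompactSupport
        · have : Continuous fun x => (inner ℝ (aj j) (fderiv ℝ ξ x (EuclideanSpace.single j 1)) : ℝ) :=
            (innerSL ℝ (aj j)).continuous.comp
              ((ContinuousLinearMap.apply ℝ (EuclideanSpace ℝ (Fin N))
                (EuclideanSpace.single j 1)).continuous.comp (hξ.continuous_fderiv (by simp)))
          have he : (fun x => fderiv ℝ (hj j) x (EuclideanSpace.single j 1))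
              = fun x => (inner ℝ (aj j) (fderiv ℝ ξ x (EuclideanSpace.single j 1)) : ℝ) := by
            funext x; exact hjfderiv j x _
          rw [he]; exact this
        · apply HasCompactSupport.intro hcs
          intro x hx
          rw [hjfderiv]
          have h : fderiv ℝ ξ x = 0 := by
            have := support_fderiv_subset (𝕜 := ℝ) (f := ξ)
            by_contra hne
            exact hx (this hne)
          simp [h]
    _ = 0 := by
        apply Finset.sum_eq_zero
        intro j _
        have hIBP := integral_mul_fderiv_eq_neg_fderiv_mul_of_integrable
          (𝕜 := ℝ) (μ := volume) (f := fun _ => (1:ℝ)) (g := hj j)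
          (v := EuclideanSpace.single j 1) ?_ ?_ ?_ (fun x _ => differentiableAt_const (1:ℝ)) (fun x _ => hjdiff j x)
        · have e0 : (fun x => fderiv ℝ (fun _ : EuclideanSpace ℝ (Fin n) => (1:ℝ)) x
              (EuclideanSpace.single j 1) * hj j x) = fun _ => (0:ℝ) := by
            funext x; simp [fderiv_const]
          rw [e0] at hIBP
          simp only [one_mul] at hIBP
          rw [hIBP]
          simp
        · have e0 : (fun x => fderiv ℝ (fun _ : EuclideanSpace ℝ (Fin n) => (1:ℝ)) x
              (EuclideanSpace.single j 1) * hj j x) = fun _ => (0:ℝ) := by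
            funext x; simp [fderiv_const]
          rw [e0]
          exact integrable_zero _ _ _
        · simp only [one_mul]
          apply Continuous.integrable_of_hasCompactSupport
          · have : Continuous fun x => (inner ℝ (aj j) (fderiv ℝ ξ x (EuclideanSpace.single j 1)) : ℝ) :=
              (innerSL ℝ (aj j)).continuous.comp
                ((ContinuousLinearMap.apply ℝ (EuclideanSpace ℝ (Fin N))
                  (EuclideanSpace.single j 1)).continuous.comp (hξ.continuous_fderiv (by simp)))
            have he : (fun x => fderiv ℝ (hj j) x (EuclideanSpace.single j 1))
                = fun x => (inner ℝ (aj j) (fderiv ℝ ξ x (EuclideanSpace.single j 1)) : ℝ) := by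
              funext x; exact hjfderiv j x _
            rw [he]; exact this
          · apply HasCompactSupport.intro hcs
            intro x hx
            rw [hjfderiv]
            have h : fderiv ℝ ξ x = 0 := by
              have := support_fderiv_subset (𝕜 := ℝ) (f := ξ)
              by_contra hne
              exact hx (this hne)
            simp [h]
        · simp only [one_mul]
          apply Continuous.integrable_of_hasCompactSupport
          · exact (innerSL ℝ (aj j)).continuous.comp hξ.continuous
          · apply HasCompactSupport.intro hcs
            intro x hx
            have h : ξ x = 0 := image_eq_zero_of_notMem_tsupport hx
            simp [hhj, h]

end GradMat


section Main
lemma cont_integrableOn_ball {E' : Type*} [NormedAddCommGroup E'] [MeasureSpace E']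
    [ProperSpace E'] [BorelSpace E'] [IsFiniteMeasureOnCompacts (volume : Measure E')]
    {h : E' → ℝ} (hh : Continuous h) (x : E') (r : ℝ) :
    IntegrableOn h (Metric.ball x r) volume :=
  (hh.continuousOn.integrableOn_compact (isCompact_closedBall x r)).mono_set
    Metric.ball_subset_closedBall


set_option maxHeartbeats 1000000

/-- If `f` is asymptotically `W^{1,φ}`-quasiconvex and locally bounded from below, then
there are `M > 0` and a uniformly strictly `W^{1,φ}`-quasiconvex `G` with `f = G` outside
the ball of radius `M` and `G ≤ f` everywhere. -/
theorem asympQC_below (φ φ' φ'' : ℝ → ℝ) (hA : SatisfiesAssumption φ φ' φ'')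
    (d d' : ℝ) (hd : 0 < d) (hd' : 0 < d')
    (hequiv : ∀ t : ℝ, 0 < t → d * (t * φ'' t) ≤ φ' t ∧ φ' t ≤ d' * (t * φ'' t))
    (n N : ℕ) (f : EuclideanSpace ℝ (Fin N × Fin n) → ℝ)
    (hf : AsympQC (n := n) (N := N) φ' f)
    (hbb : ∀ R : ℝ, 0 < R → BddBelow (f '' Metric.ball 0 R)) :
    ∃ (M : ℝ) (G : EuclideanSpace ℝ (Fin N × Fin n) → ℝ) (k : ℝ),
      0 < M ∧ Continuous G ∧ 0 < k ∧ UnifStrictQC φ' k G ∧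
      (∀ z, M < ‖z‖ → f z = G z) ∧ ∀ z, G z ≤ f z := by
  classical
  obtain ⟨M, g, k, hM, hgcont, hk, hQC, hfg⟩ := hf
  have h0 : φ' 0 = 0 := hA.1.2.2.1
  have hmono : MonotoneOn φ' (Set.Ici 0) := hA.1.2.2.2.2.2.1
  have hposφ : ∀ t : ℝ, 0 < t → 0 < φ' t := hA.1.2.2.2.2.2.2.1
  have hcont : ContinuousOn φ' (Set.Ici 0) := hA.2.2.1
  have hβ : 0 < φ' (1/2) := hposφ _ (by norm_num)
  obtain ⟨B, hBnn, hB⟩ := exists_boundT1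
  obtain ⟨L, hLnn, hL⟩ := exists_boundT2
  -- choose the constant c
  obtain ⟨C₁, hC₁⟩ : ∃ C₁, ∀ y ∈ Metric.closedBall (0 : EuclideanSpace ℝ (Fin N × Fin n)) M,
      g y ≤ C₁ := by
    obtain ⟨C₁, hC₁⟩ := IsCompact.exists_bound_of_continuousOn
      (isCompact_closedBall (0 : EuclideanSpace ℝ (Fin N × Fin n)) M) hgcont.continuousOn
    exact ⟨C₁, fun y hy => (le_abs_self _).trans (by simpa using hC₁ y hy)⟩
  obtain ⟨C₂, hC₂⟩ := hbb (M + 1) (by linarith)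
  have hC₂' : ∀ y ∈ Metric.ball (0 : EuclideanSpace ℝ (Fin N × Fin n)) (M+1), C₂ ≤ f y :=
    fun y hy => hC₂ ⟨y, hy, rfl⟩
  set c : ℝ := max 1 (C₁ - C₂) with hcdef
  have hc : 1 ≤ c := le_max_left _ _
  have hcnn : 0 ≤ c := by linarith
  have hgf : ∀ y : EuclideanSpace ℝ (Fin N × Fin n), ‖y‖ ≤ M → g y - f y ≤ c := by
    intro y hy
    have h1 : g y ≤ C₁ := hC₁ y (by simpa [Metric.mem_closedBall, dist_zero_right] using hy)
    have h2 : C₂ ≤ f y := hC₂' y (by simp [Metric.mem_ball, dist_zero_right]; linarith)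
    have : C₁ - C₂ ≤ c := le_max_right _ _
    linarith
  set β : ℝ := φ' (1/2) with hβdef
  set M' : ℝ := max (max 1 (2*M)) (32*c*(16*L + 8*B + 1)/(k * β)) with hM'def
  have hM'1 : 1 ≤ M' := le_trans (le_max_left _ _) (le_max_left _ _)
  have hM'2 : 2*M ≤ M' := le_trans (le_max_right _ _) (le_max_left _ _)
  have hM'3 : 32*c*(16*L + 8*B + 1)/(k * β) ≤ M' := le_max_right _ _
  have hM'pos : 0 < M' := by linarith
  have hMM' : M < M' := by linarith
  set W : ℝ := M'^2 - M^2 with hWdef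
  have hW : 0 < W := by nlinarith
  set lam : EuclideanSpace ℝ (Fin N × Fin n) → ℝ := lamF c (M'^2) W with hlamdef
  refine ⟨M', fun y => g y - lam y, k/2, hM'pos, hgcont.sub (lamF_cont c (M'^2) W),
    half_pos hk, ?_, ?_, ?_⟩
  · -- quasiconvexity
    intro z ξ hC1 hcs hsub
    have hQC' := hQC z ξ hC1 hcs hsub
    rw [setAverage_eq, setAverage_eq, smul_eq_mul, smul_eq_mul] at hQC'
    set a : ℝ := 1 + ‖z‖ with hadef
    have ha0 : 0 < a := by have := norm_nonneg z; simp only [hadef]; linarith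
    set D := gradMat ξ with hDdef
    have hDcont : Continuous D := gradMat_continuous hC1
    obtain ⟨T0, hT0⟩ := (gradMat_hasCompactSupport hcs).exists_bound_of_continuous hDcont
    have hT0nn : 0 ≤ T0 := le_trans (norm_nonneg _) (hT0 0)
    set Φ : EuclideanSpace ℝ (Fin n) → ℝ := fun x => shiftedPhi φ' a ‖D x‖ with hΦdef
    have hΦcont : Continuous Φ :=
      (shiftedPhi_contOn hcont ha0 hT0nn).comp_continuous
        (continuous_norm.comp hDcont) (fun x => ⟨norm_nonneg _, hT0 x⟩)
    have hΦnn : ∀ x, 0 ≤ Φ x := fun x => shiftedPhi_nonneg hmono h0 ha0 (norm_nonneg _)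
    set V : ℝ := (volume (Metric.ball (0 : EuclideanSpace ℝ (Fin n)) 1)).toReal with hVdef
    have hVpos : 0 < V := by
      apply ENNReal.toReal_pos
      · exact (Metric.measure_ball_pos volume 0 one_pos).ne'
      · exact measure_ball_lt_top.ne
    have hVinv : V * V⁻¹ = 1 := mul_inv_cancel₀ hVpos.ne'
    -- the linear functional vector
    set zσ : EuclideanSpace ℝ (Fin N × Fin n) :=
      (c * deriv Real.smoothTransition ((M'^2 - ‖z‖^2)/W) * (-2/W)) • z with hzσdef
    have hsig : ∀ w : EuclideanSpace ℝ (Fin N × Fin n),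
        sigmaF c (M'^2) W z w = (inner ℝ zσ w : ℝ) := by
      intro w
      rw [hzσdef, real_inner_smul_left, sigmaF]
      ring
    set R : EuclideanSpace ℝ (Fin n) → ℝ := fun x => lam (z + D x) - lam z - (inner ℝ zσ (D x) : ℝ) with hRdef
    have hRle : ∀ x, R x ≤ k/2 * Φ x := by
      intro x
      have := pointwise_est hcont hmono h0 hB hL hc hM hk hβ hM'1 hM'2 hM'3 z (D x)
      rw [hsig (D x)] at this
      exact this
    have hRcont : Continuous R := by
      apply Continuous.sub
      · apply Continuous.sub
        · exact (lamF_cont c (M'^2) W).comp (continuous_const.add hDcont)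
        · exact continuous_const
      · exact (innerSL ℝ zσ).continuous.comp hDcont
    -- integrability
    have hgint : IntegrableOn (fun x => g (z + D x)) (Metric.ball (0 : EuclideanSpace ℝ (Fin n)) 1) volume :=
      cont_integrableOn_ball (hgcont.comp (continuous_const.add hDcont)) 0 1
    have hlint : IntegrableOn (fun x => lam (z + D x)) (Metric.ball (0 : EuclideanSpace ℝ (Fin n)) 1) volume :=
      cont_integrableOn_ball ((lamF_cont c (M'^2) W).comp (continuous_const.add hDcont)) 0 1
    have hΦint : IntegrableOn Φ (Metric.ball (0 : EuclideanSpace ℝ (Fin n)) 1) volume :=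
      cont_integrableOn_ball hΦcont 0 1
    have hRint : IntegrableOn R (Metric.ball (0 : EuclideanSpace ℝ (Fin n)) 1) volume :=
      cont_integrableOn_ball hRcont 0 1
    have hinnerint : IntegrableOn (fun x => (inner ℝ zσ (D x) : ℝ)) (Metric.ball (0 : EuclideanSpace ℝ (Fin n)) 1) volume :=
      cont_integrableOn_ball ((innerSL ℝ zσ).continuous.comp hDcont) 0 1
    set IΦ : ℝ := ∫ x in Metric.ball (0 : EuclideanSpace ℝ (Fin n)) 1, Φ x with hIΦdef
    set Ig : ℝ := ∫ x in Metric.ball (0 : EuclideanSpace ℝ (Fin n)) 1, g (z + D x) with hIgdef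
    set Il : ℝ := ∫ x in Metric.ball (0 : EuclideanSpace ℝ (Fin n)) 1, lam (z + D x) with hIldef
    have hIΦnn : 0 ≤ IΦ := setIntegral_nonneg Metric.isOpen_ball.measurableSet (fun x _ => hΦnn x)
    -- IBP: the linear term integrates to zero
    have hzero : ∫ x in Metric.ball (0 : EuclideanSpace ℝ (Fin n)) 1, (inner ℝ zσ (D x) : ℝ) = 0 :=
      integral_inner_gradMat hC1 hcs hsub zσ
    -- bound on Il
    have hIl : Il ≤ V * lam z + k/2 * IΦ := by
      have hident : (fun x => lam (z + D x))
          = fun x => lam z + ((inner ℝ zσ (D x) : ℝ) + R x) := by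
        funext x; simp only [hRdef]; ring
      have hIR : (∫ x in Metric.ball (0 : EuclideanSpace ℝ (Fin n)) 1, R x) ≤ k/2 * IΦ := by
        have := setIntegral_mono_on hRint (hΦint.const_mul (k/2))
          (Metric.isOpen_ball.measurableSet) (fun x _ => hRle x)
        rwa [MeasureTheory.integral_const_mul] at this
      calc Il = ∫ x in Metric.ball (0 : EuclideanSpace ℝ (Fin n)) 1, (lam z + ((inner ℝ zσ (D x) : ℝ) + R x)) := by
            rw [hIldef, hident]
        _ = (∫ _x in Metric.ball (0 : EuclideanSpace ℝ (Fin n)) 1, lam z)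
              + ∫ x in Metric.ball (0 : EuclideanSpace ℝ (Fin n)) 1,
                ((inner ℝ zσ (D x) : ℝ) + R x) :=
            MeasureTheory.integral_add (integrableOn_const measure_ball_lt_top.ne)
              (hinnerint.add hRint)
        _ = V * lam z + ((∫ x in Metric.ball (0 : EuclideanSpace ℝ (Fin n)) 1, (inner ℝ zσ (D x) : ℝ))
              + ∫ x in Metric.ball (0 : EuclideanSpace ℝ (Fin n)) 1, R x) := by
            rw [MeasureTheory.integral_add hinnerint hRint, setIntegral_const, smul_eq_mul]; rfl
        _ = V * lam z + ∫ x in Metric.ball (0 : EuclideanSpace ℝ (Fin n)) 1, R x := by rw [hzero]; ring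
        _ ≤ V * lam z + k/2 * IΦ := by linarith
    -- the hypothesis inequality, in integral form
    have hQCV : V * g z + k * IΦ ≤ Ig := by
      have h1 := mul_le_mul_of_nonneg_left hQC' hVpos.le
      calc V * g z + k * IΦ
          = V * (g z + k * (V⁻¹ * IΦ)) := by
            have : V * (g z + k * (V⁻¹ * IΦ)) = V * g z + k * (V * V⁻¹) * IΦ := by ring
            rw [this, hVinv]; ring
        _ ≤ V * (V⁻¹ * Ig) := h1
        _ = Ig := by rw [← mul_assoc, hVinv, one_mul]
    -- final computation
    rw [setAverage_eq, setAverage_eq, smul_eq_mul, smul_eq_mul]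
    have hIG : (∫ x in Metric.ball (0 : EuclideanSpace ℝ (Fin n)) 1, (g (z + D x) - lam (z + D x))) = Ig - Il :=
      MeasureTheory.integral_sub hgint hlint
    rw [hIG]
    rw [show volume.real (Metric.ball (0 : EuclideanSpace ℝ (Fin n)) 1) = V from rfl]
    refine (mul_le_mul_iff_right₀ hVpos).mp ?_
    calc V * ((g z - lam z) + k/2 * (V⁻¹ * IΦ))
        = V * g z - V * lam z + k/2 * (V * V⁻¹) * IΦ := by ring
      _ = V * g z - V * lam z + k/2 * IΦ := by rw [hVinv]; ring
      _ ≤ Ig - Il := by linarith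
      _ = V * (V⁻¹ * (Ig - Il)) := by
          rw [← mul_assoc, hVinv, one_mul]
  · -- f = G outside the ball of radius M'
    intro z hz
    show f z = g z - lam z
    have h1 : f z = g z := hfg z (by linarith)
    have h2 : lam z = 0 := lamF_zero hW (by nlinarith [norm_nonneg z])
    rw [h1, h2, sub_zero]
  · -- G ≤ f
    intro z
    show g z - lam z ≤ f z
    rcases le_or_gt (‖z‖) M with hzM | hzM
    · have h2 : lam z = c := lamF_eq_c hW (by nlinarith [norm_nonneg z])
      have := hgf z hzM
      rw [h2]; linarith
    · have h1 : f z = g z := hfg z hzM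
      have h2 : 0 ≤ lam z := lamF_nonneg hcnn z
      rw [h1]; linarith


end Main
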